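/- Let A be a C*-algebra, J a closed left ideal in A, and (u_β) a contractive approximate identity of the closed two-sided ideal JJ*. Then J is an essential left ideal in A if and only if ‖a‖ = sup_β ‖a u_β‖ for all a ∈ A. -/

import Mathlib

open Filter Topology

/-- The closed linear span of the set of products `{s * t : s ∈ S, t ∈ T}` in `A`. -/
noncomputable def mulSpan {A : Type*} [NonUnitalCStarAlgebra A] (S T : Set A) : Submodule ℂ A :=
  (Submodule.span ℂ (Set.image2 (· * ·) S T)).topologicalClosure

/-- `e` is a contractive (two-sided) approximate identity of the closed two-sided ideal `K`:
an increasing net of positive elements of `K` of norm at most one, with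
`lim_β k * e_β = k = lim_β e_β * k` for every `k ∈ K`. -/
def IsContractiveApproxUnit {A : Type*} [NonUnitalCStarAlgebra A]
    [PartialOrder A] [StarOrderedRing A]
    {ι : Type*} [Nonempty ι] [SemilatticeSup ι]
    (K : Submodule ℂ A) (e : ι → A) : Prop :=
  Monotone e ∧ (∀ i, 0 ≤ e i) ∧ (∀ i, e i ∈ K) ∧ (∀ i, ‖e i‖ ≤ 1) ∧
    (∀ k ∈ K, Filter.Tendsto (fun i => k * e i) Filter.atTop (nhds k)) ∧
    (∀ k ∈ K, Filter.Tendsto (fun i => e i * k) Filter.atTop (nhds k))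

/-- If `J` is essential and `‖a j‖ ≤ s ‖j‖` for all `j ∈ J`, then `‖a‖ ≤ s`. -/
private lemma norm_le_of_essential {A : Type*} [NonUnitalCStarAlgebra A]
    [PartialOrder A] [StarOrderedRing A]
    (J : Submodule ℂ A)
    (hJl : ∀ a : A, ∀ x ∈ J, a * x ∈ J)
    (hess : ∀ a : A, (∀ j ∈ J, a * j = 0) → a = 0)
    (a : A) {s : ℝ} (hs : 0 ≤ s)
    (hle : ∀ j ∈ J, ‖a * j‖ ≤ s * ‖j‖) : ‖a‖ ≤ s := by
  have key : ∀ t : ℝ, s ^ 2 < t → ‖a‖ ^ 2 ≤ t := by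
    intro t ht
    have ht0 : 0 < t := lt_of_le_of_lt (sq_nonneg s) ht
    have hc : (0 : A) ≤ star a * a := star_mul_self_nonneg a
    have hc_sa : IsSelfAdjoint (star a * a) := IsSelfAdjoint.of_nonneg hc
    set c : A := star a * a with hc_def
    have hfcont : Continuous (fun r : ℝ => max (r - t) 0) := by fun_prop
    have hf0 : max ((0:ℝ) - t) 0 = 0 := by simp [ht0.le]
    set d : A := cfcₙ (fun r : ℝ => max (r - t) 0) c with hd_def
    have hd_nonneg : 0 ≤ d := cfcₙ_nonneg (fun x _ => le_max_right _ _)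
    have hd_sa : IsSelfAdjoint d := IsSelfAdjoint.of_nonneg hd_nonneg
    -- key operator inequality : t • (d * d) ≤ d * c * d
    have hkey : t • (d * d) ≤ d * c * d := by
      have h1 : d * c * d = cfcₙ (fun r : ℝ => (max (r - t) 0 * r) * max (r - t) 0) c := by
        rw [hd_def,
          cfcₙ_mul (fun r : ℝ => max (r - t) 0 * r) (fun r : ℝ => max (r - t) 0) c
          (by fun_prop) (by simp) (by fun_prop) (by simp [ht0.le]),
          cfcₙ_mul (fun r : ℝ => max (r - t) 0) (fun r : ℝ => r) c
          (by fun_prop) (by simp [ht0.le]) (by fun_prop) rfl, cfcₙ_id' ℝ c hc_sa]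
      have h2 : t • (d * d) = cfcₙ (fun r : ℝ => t * (max (r - t) 0 * max (r - t) 0)) c := by
        rw [hd_def,
          cfcₙ_const_mul t (fun r : ℝ => max (r - t) 0 * max (r - t) 0) c
          (by fun_prop) (by simp [ht0.le]),
          cfcₙ_mul (fun r : ℝ => max (r - t) 0) (fun r : ℝ => max (r - t) 0) c
          (by fun_prop) (by simp [ht0.le]) (by fun_prop) (by simp [ht0.le])]
      rw [h1, h2]
      refine cfcₙ_mono (fun r _ => ?_) (by fun_prop) (by fun_prop) (by simp [ht0.le])
        (by simp [ht0.le])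
      rcases le_or_gt r t with h | h
      · rw [max_eq_right (by linarith)]; simp
      · rw [max_eq_left (by linarith)]; nlinarith
    -- every j ∈ J is annihilated by d
    have hdj : ∀ j ∈ J, d * j = 0 := by
      intro j hj
      have hy : d * j ∈ J := hJl d j hj
      have h1 : ‖a * (d * j)‖ ≤ s * ‖d * j‖ := hle _ hy
      have h3 : star j * (t • (d * d)) * j ≤ star j * (d * c * d) * j :=
        star_left_conjugate_le_conjugate hkey j
      have h4 : star j * (t • (d * d)) * j = t • (star (d * j) * (d * j)) := by
        rw [star_mul, hd_sa.star_eq]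
        simp only [smul_mul_assoc, mul_smul_comm, mul_assoc]
      have h5 : star j * (d * c * d) * j = star (a * (d * j)) * (a * (d * j)) := by
        simp only [star_mul, hd_sa.star_eq, hc_def, mul_assoc]
      have h6 : (0 : A) ≤ t • (star (d * j) * (d * j)) :=
        smul_nonneg ht0.le (star_mul_self_nonneg _)
      have h7 : ‖t • (star (d * j) * (d * j))‖ ≤ ‖star (a * (d * j)) * (a * (d * j))‖ := by
        rw [← h4, ← h5]
        exact CStarAlgebra.norm_le_norm_of_nonneg_of_le (h4 ▸ h6) h3
      rw [norm_smul, Real.norm_of_nonneg ht0.le, CStarRing.norm_star_mul_self,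
        CStarRing.norm_star_mul_self] at h7
      have hjn : ‖d * j‖ = 0 := by
        by_contra hne
        have hpos : 0 < ‖d * j‖ := lt_of_le_of_ne (norm_nonneg _) (Ne.symm hne)
        have h8 : ‖a * (d * j)‖ * ‖a * (d * j)‖ ≤ (s * ‖d * j‖) * (s * ‖d * j‖) :=
          mul_le_mul h1 h1 (norm_nonneg _) (mul_nonneg hs (norm_nonneg _))
        nlinarith [h7, h8, ht, hpos, mul_pos hpos hpos]
      exact norm_eq_zero.mp hjn
    have hd0 : d = 0 := hess d hdj
    -- hence c = cfcₙ (min · t) c and ‖c‖ ≤ t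
    have hc_eq : c = cfcₙ (fun r : ℝ => min r t) c := by
      have : cfcₙ (fun r : ℝ => min r t + max (r - t) 0) c
          = cfcₙ (fun r : ℝ => min r t) c + d := by
        rw [hd_def]
        exact cfcₙ_add (fun r : ℝ => min r t) (fun r : ℝ => max (r - t) 0) c
          (by fun_prop) (by simp [ht0.le]) (by fun_prop) (by simp [ht0.le])
      have hid : (fun r : ℝ => min r t + max (r - t) 0) = fun r : ℝ => r := by
        funext r
        rcases le_or_gt r t with h | h
        · rw [min_eq_left h, max_eq_right (by linarith)]; ring
        · rw [min_eq_right h.le, max_eq_left (by linarith)]; ring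
      rw [hid] at this
      conv_lhs => rw [← cfcₙ_id' ℝ c hc_sa]
      rw [this, hd0, add_zero]
    have hnc : ‖c‖ ≤ t := by
      rw [hc_eq]
      refine norm_cfcₙ_le fun r hr => ?_
      have hr0 : 0 ≤ r := quasispectrum_nonneg_of_nonneg c hc r hr
      rw [Real.norm_of_nonneg (le_min hr0 ht0.le)]
      exact min_le_right r t
    calc ‖a‖ ^ 2 = ‖c‖ := by rw [hc_def, CStarRing.norm_star_mul_self]; ring
    _ ≤ t := hnc
  have h2 : ‖a‖ ^ 2 ≤ s ^ 2 := by
    by_contra h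
    push_neg at h
    have := key ((s ^ 2 + ‖a‖ ^ 2) / 2) (by linarith)
    linarith
  nlinarith [norm_nonneg a]

theorem essential_iff_norm_eq_sup_JJstar_approx_unit
    {A : Type*} [NonUnitalCStarAlgebra A] [PartialOrder A] [StarOrderedRing A]
    {ι : Type*} [Nonempty ι] [SemilatticeSup ι]
    (J : Submodule ℂ A)
    (hJc : IsClosed (J : Set A))
    (hJl : ∀ a : A, ∀ x ∈ J, a * x ∈ J)
    (u : ι → A)
    (hu : IsContractiveApproxUnit (mulSpan (J : Set A) (star '' (J : Set A))) u) :
    (∀ a : A, (∀ j ∈ J, a * j = 0) → a = 0) ↔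
    (∀ a : A, ‖a‖ = ⨆ β : ι, ‖a * u β‖) := by
  obtain ⟨hmono, hpos, hmem, hnorm1, hright, hleft⟩ := hu
  have hK : ∀ j ∈ J, j * star j ∈ mulSpan (J : Set A) (star '' (J : Set A)) := fun j hj =>
    Submodule.le_topologicalClosure _
      (Submodule.subset_span (Set.mem_image2_of_mem hj ⟨j, hj, rfl⟩))
  -- u β * j → j for every j ∈ J
  have htends : ∀ j ∈ J, Tendsto (fun β => u β * j) atTop (𝓝 j) := by
    intro j hj
    have hk := hleft (j * star j) (hK j hj)
    have hkn : Tendsto (fun β => ‖j * star j - u β * (j * star j)‖) atTop (𝓝 0) := by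
      have h0 : Tendsto (fun β => j * star j - u β * (j * star j)) atTop
          (𝓝 (j * star j - j * star j)) := tendsto_const_nhds.sub hk
      rw [sub_self] at h0
      simpa using h0.norm
    have keysq : ∀ β, ‖j - u β * j‖ ^ 2 ≤ 2 * ‖j * star j - u β * (j * star j)‖ := by
      intro β
      have hsa : star (u β) = u β := (IsSelfAdjoint.of_nonneg (hpos β)).star_eq
      have h2 : (j - u β * j) * star (j - u β * j)
          = (j * star j - u β * (j * star j)) - (j * star j - u β * (j * star j)) * u β := by
        simp only [star_sub, star_mul, hsa]
        noncomm_ring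
      have h1 : ‖j - u β * j‖ ^ 2 = ‖(j - u β * j) * star (j - u β * j)‖ := by
        rw [CStarRing.norm_self_mul_star]; ring
      rw [h1, h2]
      calc ‖(j * star j - u β * (j * star j)) - (j * star j - u β * (j * star j)) * u β‖
          ≤ ‖j * star j - u β * (j * star j)‖ + ‖(j * star j - u β * (j * star j)) * u β‖ :=
            norm_sub_le _ _
        _ ≤ ‖j * star j - u β * (j * star j)‖
            + ‖j * star j - u β * (j * star j)‖ * ‖u β‖ :=
            add_le_add le_rfl (norm_mul_le _ _)
        _ ≤ 2 * ‖j * star j - u β * (j * star j)‖ := by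
            nlinarith [hnorm1 β, norm_nonneg (j * star j - u β * (j * star j)),
              norm_nonneg (u β)]
    have hsq : Tendsto (fun β => ‖j - u β * j‖ ^ 2) atTop (𝓝 0) := by
      refine squeeze_zero (fun β => sq_nonneg _) keysq ?_
      simpa using hkn.const_mul 2
    have hnn : Tendsto (fun β => ‖j - u β * j‖) atTop (𝓝 0) := by
      have := (Real.continuous_sqrt.tendsto 0).comp hsq
      simpa only [Function.comp_def, Real.sqrt_sq_eq_abs, abs_norm, Real.sqrt_zero] using this
    rw [tendsto_iff_norm_sub_tendsto_zero]
    simpa [norm_sub_rev] using hnn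
  constructor
  · -- essential → norm formula
    intro hess a
    have hub : ∀ β, ‖a * u β‖ ≤ ‖a‖ := fun β =>
      (norm_mul_le _ _).trans (mul_le_of_le_one_right (norm_nonneg a) (hnorm1 β))
    have hbdd : BddAbove (Set.range fun β => ‖a * u β‖) :=
      ⟨‖a‖, by rintro x ⟨β, rfl⟩; exact hub β⟩
    set s := ⨆ β : ι, ‖a * u β‖ with hs_def
    have hsle : s ≤ ‖a‖ := ciSup_le hub
    have hs0 : 0 ≤ s :=
      (norm_nonneg _).trans (le_ciSup hbdd (Classical.arbitrary ι))
    refine le_antisymm ?_ hsle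
    refine norm_le_of_essential J hJl hess a hs0 fun j hj => ?_
    have ht : Tendsto (fun β => a * (u β * j)) atTop (𝓝 (a * j)) :=
      (htends j hj).const_mul a
    refine le_of_tendsto ht.norm (Eventually.of_forall fun β => ?_)
    calc ‖a * (u β * j)‖ = ‖(a * u β) * j‖ := by rw [mul_assoc]
      _ ≤ ‖a * u β‖ * ‖j‖ := norm_mul_le _ _
      _ ≤ s * ‖j‖ := mul_le_mul_of_nonneg_right (le_ciSup hbdd β) (norm_nonneg j)
  · -- norm formula → essential
    intro hnorm a ha
    have haK : ∀ x ∈ mulSpan (J : Set A) (star '' (J : Set A)), a * x = 0 := by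
      intro x hx
      have hker : mulSpan (J : Set A) (star '' (J : Set A)) ≤
          LinearMap.ker (ContinuousLinearMap.mul ℂ A a : A →ₗ[ℂ] A) := by
        refine Submodule.topologicalClosure_minimal _ ?_
          (ContinuousLinearMap.isClosed_ker _)
        rw [Submodule.span_le]
        rintro - ⟨x, hxJ, -, ⟨y, hyJ, rfl⟩, rfl⟩
        simp only [SetLike.mem_coe, LinearMap.mem_ker, ContinuousLinearMap.coe_coe,
          ContinuousLinearMap.mul_apply']
        rw [← mul_assoc, ha x hxJ, zero_mul]
      simpa using hker hx
    have hzero : ∀ β, a * u β = 0 := fun β => haK (u β) (hmem β)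
    have : ‖a‖ = 0 := by
      rw [hnorm a]
      simp [hzero]
    exact norm_eq_zero.mp this
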